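/- With notation as follows: p prime, n ≥ 1, 1 ≤ t ≤ n, n′ = n+t+1, a fixed quadratic form Q = Σ_{r=1}^t Σ_{α=1}^{m_r−1} x_{π_r(α)} x_{π_r(α+1)} + Σ_{r=2}^{t+1} c_r x_{n+r} x_{n+1} + Σ_{2≤μ<ν≤t} d_{μν} x_{n+μ} x_{n+ν} + Σ_{r=1}^t x_{π_r(1)} x_{n+r} (coefficients in Z_p, c_{t+1} ≠ 0), and the sets Z(d,e,e′) = { ξ(Q + Σ_{α=1}^n d_α x_α + Σ_{β=1}^{t+1} e_β x_{n+β} + e′ + Σ_{r=1}^t h_r x_{π_r(m_r)}) : h ∈ (Z_p)^t } for (d,e,e′) ∈ (Z_p)^{n+t+2}: the distinct sets Z(d,e,e′) are pairwise disjoint, each has exactly p^t elements, and their union equals the entire coset ξ(Q) + GRM_p(n′,1) (of size p^{n′+1}); that is, the p^{n′+1−t} distinct ZCZ sequence sets with fixed quadratic form Q partition the second-order coset ξ(Q) + GRM_p(n′,1). -/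
import Mathlib


open Finset

/-- The `k`-th base-`p` digit of `x`, viewed as an element of `ZMod p`. -/
def digitZ (p x k : ℕ) : ZMod p := ((x / p ^ k) % p : ℕ)

/-- The `Z_p`-valued vector `ξ(f)` of length `p^m` associated with an extended Boolean
function `f : (Z_p)^m → Z_p`: its `x`-th entry is `f(x₁,…,x_m)` where `(x₁,…,x_m)`
are the base-`p` digits of `x`. -/
def xiVec (p m : ℕ) (f : (Fin m → ZMod p) → ZMod p) : Fin (p ^ m) → ZMod p :=
  fun x => f fun k => digitZ p (x : ℕ) (k : ℕ)

/-- The first-order generalized Reed–Muller code `GRM_p(m,1)`: all evaluation vectors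
of affine functions `a₀ + ∑ᵢ aᵢ xᵢ`. -/
def GRM1 (p m : ℕ) : Set (Fin (p ^ m) → ZMod p) :=
  { v | ∃ (a0 : ZMod p) (a : Fin m → ZMod p),
      v = xiVec p m fun x => a0 + ∑ i : Fin m, a i * x i }

lemma xiVec_inj (p m : ℕ) [NeZero p] : Function.Injective (xiVec p m) := by
  intro f g hfg
  funext y
  set x : Fin (p ^ m) := finFunctionFinEquiv (fun j => (⟨(y j).val, ZMod.val_lt _⟩ : Fin p)) with hx
  have key : (fun k : Fin m => digitZ p (x : ℕ) (k : ℕ)) = y := by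
    funext k
    have h1 : finFunctionFinEquiv.symm x k = ⟨(y k).val, ZMod.val_lt _⟩ := by
      rw [hx, Equiv.symm_apply_apply]
    have h2 : (x : ℕ) / p ^ (k : ℕ) % p = (y k).val := congrArg Fin.val h1
    unfold digitZ
    rw [h2, ZMod.natCast_val, ZMod.cast_id]
  have h3 := congrFun hfg x
  simpa only [xiVec, key] using h3

lemma affine_coeffs {p m : ℕ} {a0 b0 : ZMod p} {a b : Fin m → ZMod p}
    (H : ∀ x : Fin m → ZMod p, a0 + ∑ i, a i * x i = b0 + ∑ i, b i * x i) :
    a0 = b0 ∧ a = b := by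
  have h0 := H 0
  simp only [Pi.zero_apply, mul_zero, Finset.sum_const_zero, add_zero] at h0
  refine ⟨h0, funext fun i => ?_⟩
  have hi := H (Pi.single i 1)
  simp only [Pi.single_apply, mul_ite, mul_one, mul_zero, Finset.sum_ite_eq',
    Finset.mem_univ, if_true] at hi
  rw [h0] at hi
  exact add_left_cancel hi

def baseF {p n s : ℕ} (d : Fin n → ZMod p) (e : Fin s → ZMod p) : Fin (n + s) → ZMod p :=
  fun i => if hi : (i : ℕ) < n then d ⟨i, hi⟩ else e ⟨(i : ℕ) - n, by have := i.isLt; omega⟩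

lemma baseF_castAdd {p n s : ℕ} (d : Fin n → ZMod p) (e : Fin s → ZMod p) (α : Fin n) :
    baseF d e (Fin.castAdd s α) = d α := by
  simp [baseF, Fin.castAdd, Fin.castLE, α.isLt]

lemma baseF_natAdd {p n s : ℕ} (d : Fin n → ZMod p) (e : Fin s → ZMod p) (β : Fin s) :
    baseF d e (Fin.natAdd n β) = e β := by
  have h1 : ¬ ((Fin.natAdd n β : Fin (n + s)) : ℕ) < n := by simp [Fin.natAdd]
  simp only [baseF, dif_neg h1]
  congr 1
  ext
  simp [Fin.natAdd]

def coefF {p n s t' : ℕ} (d : Fin n → ZMod p) (e : Fin s → ZMod p)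
    (J : Fin t' → Fin (n + s)) (h : Fin t' → ZMod p) : Fin (n + s) → ZMod p :=
  fun i => baseF d e i + ∑ r, if i = J r then h r else 0

lemma coefF_not {p n s t' : ℕ} {d : Fin n → ZMod p} {e : Fin s → ZMod p}
    {J : Fin t' → Fin (n + s)} {h : Fin t' → ZMod p} {i : Fin (n + s)}
    (hi : ∀ r, i ≠ J r) : coefF d e J h i = baseF d e i := by
  simp only [coefF]
  rw [Finset.sum_eq_zero (fun r _ => by rw [if_neg (hi r)]), add_zero]

lemma coefF_J {p n s t' : ℕ} {d : Fin n → ZMod p} {e : Fin s → ZMod p}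
    {J : Fin t' → Fin (n + s)} (hJinj : Function.Injective J) (h : Fin t' → ZMod p)
    (r : Fin t') : coefF d e J h (J r) = baseF d e (J r) + h r := by
  simp only [coefF]
  congr 1
  rw [Finset.sum_eq_single r (fun s _ hs => by
      rw [if_neg (fun hc => hs (hJinj hc.symm))]) (by simp), if_pos rfl]

lemma sum_coefF {p n s t' : ℕ} (d : Fin n → ZMod p) (e : Fin s → ZMod p)
    (J : Fin t' → Fin (n + s)) (h : Fin t' → ZMod p) (x : Fin (n + s) → ZMod p) :
    ∑ i, coefF d e J h i * x i =
      (∑ α : Fin n, d α * x (Fin.castAdd s α)) + (∑ β : Fin s, e β * x (Fin.natAdd n β))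
        + ∑ r, h r * x (J r) := by
  simp only [coefF, add_mul, Finset.sum_add_distrib]
  congr 1
  · rw [Fin.sum_univ_add (f := fun i => baseF d e i * x i)]
    congr 1
    · exact Finset.sum_congr rfl fun α _ => by rw [baseF_castAdd]
    · exact Finset.sum_congr rfl fun β _ => by rw [baseF_natAdd]
  · simp only [Finset.sum_mul]
    rw [Finset.sum_comm]
    refine Finset.sum_congr rfl fun r _ => ?_
    simp only [ite_mul, zero_mul]
    rw [Finset.sum_ite_eq' Finset.univ (J r) (fun i => h r * x i)]
    simp

def PhiF (p N : ℕ) (Q : (Fin N → ZMod p) → ZMod p) (a0 : ZMod p) (a : Fin N → ZMod p) :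
    Fin (p ^ N) → ZMod p :=
  xiVec p N fun x => Q x + (a0 + ∑ i, a i * x i)

lemma PhiF_inj {p N : ℕ} [NeZero p] {Q : (Fin N → ZMod p) → ZMod p}
    {a0 b0 : ZMod p} {a b : Fin N → ZMod p}
    (H : PhiF p N Q a0 a = PhiF p N Q b0 b) : a0 = b0 ∧ a = b := by
  have h1 := xiVec_inj p N H
  refine affine_coeffs fun x => ?_
  have := congrFun h1 x
  exact add_left_cancel this

lemma sum_ite_K {p n t : ℕ} {K : Fin t → Fin n} (hK : Function.Injective K)
    (g : Fin t → ZMod p) (r : Fin t) :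
    (∑ s, if K r = K s then g s else 0) = g r := by
  rw [Finset.sum_eq_single r (fun s _ hs => if_neg fun hc => hs (hK hc).symm) (by simp),
    if_pos rfl]

/-- The splitting equivalence used to count functions vanishing on the range of `K`. -/
def splitK {p n t : ℕ} (K : Fin t → Fin n) (hK : Function.Injective K) :
    (Fin n → ZMod p) ≃ (Fin t → ZMod p) × {d : Fin n → ZMod p // ∀ r, d (K r) = 0} where
  toFun d := (fun r => d (K r),
    ⟨fun i => d i - ∑ r, if i = K r then d (K r) else 0, fun r => by
      show d (K r) - (∑ s, if K r = K s then d (K s) else 0) = 0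
      rw [sum_ite_K hK (fun s => d (K s)) r, sub_self]⟩)
  invFun q := fun i => q.2.1 i + ∑ r, if i = K r then q.1 r else 0
  left_inv d := by
    funext i
    show (d i - ∑ r, if i = K r then d (K r) else 0) + (∑ r, if i = K r then d (K r) else 0)
        = d i
    rw [sub_add_cancel]
  right_inv := by
    rintro ⟨g, d0, hd0⟩
    have hval : ∀ r : Fin t,
        d0 (K r) + (∑ s, if K r = K s then g s else 0) = g r := fun r => by
      rw [hd0 r, zero_add, sum_ite_K hK g r]
    refine Prod.ext (funext fun r => hval r) (Subtype.ext (funext fun i => ?_))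
    show (d0 i + ∑ r, if i = K r then g r else 0)
        - (∑ r, if i = K r then
            (d0 (K r) + ∑ s, if K r = K s then g s else 0) else 0) = d0 i
    have hs : (∑ r, if i = K r then
          (d0 (K r) + ∑ s, if K r = K s then g s else 0) else 0)
        = ∑ r, if i = K r then g r else 0 :=
      Finset.sum_congr rfl fun r _ => by rw [hval r]
    rw [hs, add_sub_cancel_right]

lemma card_vanish {p n t : ℕ} (hp : p ≠ 0) (K : Fin t → Fin n)
    (hK : Function.Injective K) :
    Nat.card {d : Fin n → ZMod p // ∀ r, d (K r) = 0} = p ^ (n - t) := by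
  have htn : t ≤ n := by simpa using Fintype.card_le_of_injective K hK
  have h1 := Nat.card_congr (splitK (p := p) K hK)
  rw [Nat.card_prod,
    show Nat.card (Fin n → ZMod p) = p ^ n from by
      simp [Nat.card_fun, Nat.card_zmod, Nat.card_eq_fintype_card],
    show Nat.card (Fin t → ZMod p) = p ^ t from by
      simp [Nat.card_fun, Nat.card_zmod, Nat.card_eq_fintype_card]] at h1
  have h2 : p ^ n = p ^ t * p ^ (n - t) := by
    rw [← pow_add, Nat.add_sub_cancel' htn]
  rw [h2] at h1
  exact (Nat.eq_of_mul_eq_mul_left (pow_pos (Nat.pos_of_ne_zero hp) t) h1).symm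

/-- partition of the coset: the distinct ZCZ sequence sets
`Z(d,e,e')` with fixed quadratic form `Q` are pairwise disjoint, each has exactly
`p^t` elements, and their union is the whole second-order coset `ξ(Q) + GRM_p(n',1)`
(`n' = n+t+1`), which has size `p^{n'+1}`; i.e. the `p^{n'+1−t}` distinct ZCZ sequence
sets partition the coset. -/
theorem statement6
    (p n t : ℕ) [Fact p.Prime] (hn : 1 ≤ n) (ht : 1 ≤ t) (htn : t ≤ n)
    (m : Fin t → ℕ) (hm : ∀ r, 1 ≤ m r)
    (π : Fin t → ℕ → Fin n)
    (hπ : Function.Bijective fun q : Σ r : Fin t, Fin (m r) => π q.1 (q.2 : ℕ))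
    (cg : Fin t → ZMod p) (hcg : cg ⟨t - 1, by omega⟩ ≠ 0)
    (dg : Fin t → Fin t → ZMod p)
    (Q : (Fin (n + t + 1) → ZMod p) → ZMod p)
    (hQ : ∀ x, Q x =
      (∑ r : Fin t, ∑ α ∈ Finset.range (m r - 1),
        x (Fin.castLE (by omega) (π r α)) * x (Fin.castLE (by omega) (π r (α + 1)))) +
      (∑ r : Fin t, cg r *
        (x ⟨n + 1 + (r : ℕ), by have := r.isLt; omega⟩ * x ⟨n, by omega⟩)) +
      (∑ μ : Fin t, ∑ ν : Fin t,
        if (μ : ℕ) < (ν : ℕ) ∧ (ν : ℕ) + 2 ≤ t then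
          dg μ ν * (x ⟨n + 1 + (μ : ℕ), by have := μ.isLt; omega⟩ *
            x ⟨n + 1 + (ν : ℕ), by have := ν.isLt; omega⟩)
        else 0) +
      (∑ r : Fin t, x (Fin.castLE (by omega) (π r 0)) *
        x ⟨n + (r : ℕ), by have := r.isLt; omega⟩))
    (Zset : (Fin n → ZMod p) → (Fin (t + 1) → ZMod p) → ZMod p →
      Set (Fin (p ^ (n + t + 1)) → ZMod p))
    (hZ : ∀ d e e', Zset d e e' =
      { v | ∃ h : Fin t → ZMod p, v = xiVec p (n + t + 1) fun x =>
          Q x + (∑ α : Fin n, d α * x (Fin.castLE (by omega) α)) +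
            (∑ β : Fin (t + 1), e β * x ⟨n + (β : ℕ), by have := β.isLt; omega⟩) + e' +
            ∑ r : Fin t, h r * x (Fin.castLE (by omega) (π r (m r - 1))) })
    :
    -- pairwise: two such sets are equal or disjoint
    (∀ (d₁ d₂ : Fin n → ZMod p) (e₁ e₂ : Fin (t + 1) → ZMod p) (e₁' e₂' : ZMod p),
      Zset d₁ e₁ e₁' = Zset d₂ e₂ e₂' ∨ Disjoint (Zset d₁ e₁ e₁') (Zset d₂ e₂ e₂')) ∧
    -- each set has exactly p^t elements
    (∀ (d : Fin n → ZMod p) (e : Fin (t + 1) → ZMod p) (e' : ZMod p),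
      (Zset d e e').ncard = p ^ t) ∧
    -- the union of all the sets is the whole coset ξ(Q) + GRM_p(n+t+1, 1)
    ((⋃ d : Fin n → ZMod p, ⋃ e : Fin (t + 1) → ZMod p, ⋃ e' : ZMod p, Zset d e e') =
      {v | ∃ w ∈ GRM1 p (n + t + 1), v = xiVec p (n + t + 1) Q + w}) ∧
    -- the coset has size p^{n'+1} = p^{n+t+2}
    ({v | ∃ w ∈ GRM1 p (n + t + 1), v = xiVec p (n + t + 1) Q + w}.ncard =
      p ^ (n + t + 2)) ∧
    -- and there are p^{n'+1−t} distinct such ZCZ sequence sets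
    Set.ncard {S : Set (Fin (p ^ (n + t + 1)) → ZMod p) |
        ∃ (d : Fin n → ZMod p) (e : Fin (t + 1) → ZMod p) (e' : ZMod p),
          S = Zset d e e'} = p ^ (n + 2) := by
  haveI : NeZero p := ⟨(Fact.out : p.Prime).ne_zero⟩
  set K : Fin t → Fin n := fun r => π r (m r - 1) with hKdef
  have hKinj : Function.Injective K := by
    intro r s hrs
    have h1 : (fun q : Σ r : Fin t, Fin (m r) => π q.1 (q.2 : ℕ))
        ⟨r, ⟨m r - 1, by have := hm r; omega⟩⟩ =
        (fun q : Σ r : Fin t, Fin (m r) => π q.1 (q.2 : ℕ))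
        ⟨s, ⟨m s - 1, by have := hm s; omega⟩⟩ := hrs
    exact congrArg Sigma.fst (hπ.injective h1)
  set J : Fin t → Fin (n + (t + 1)) := fun r => Fin.castLE (by omega) (K r) with hJdef
  have hJinj : Function.Injective J := by
    intro r s hrs
    have h1 := congrArg Fin.val hrs
    exact hKinj (Fin.ext h1)
  have hJlt : ∀ r, ((J r) : ℕ) < n := fun r => (K r).isLt
  have hbaseJ : ∀ (d : Fin n → ZMod p) (e : Fin (t + 1) → ZMod p) (r : Fin t),
      baseF d e (J r) = d (K r) := by
    intro d e r
    simp only [baseF, dif_pos (hJlt r)]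
    exact congrArg d (Fin.ext rfl)
  have hcoefJ : ∀ (d : Fin n → ZMod p) (e : Fin (t + 1) → ZMod p)
      (h : Fin t → ZMod p) (r : Fin t), coefF (n := n) (s := t + 1) d e J h (J r) = d (K r) + h r := by
    intro d e h r
    rw [coefF_J hJinj, hbaseJ]
  have hcoefNat : ∀ (d : Fin n → ZMod p) (e : Fin (t + 1) → ZMod p)
      (h : Fin t → ZMod p) (β : Fin (t + 1)),
      coefF (n := n) (s := t + 1) d e J h (Fin.natAdd n β) = e β := by
    intro d e h β
    rw [coefF_not, baseF_natAdd]
    intro r hc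
    have h1 : n + (β : ℕ) = ((J r) : ℕ) := congrArg Fin.val hc
    have h2 := hJlt r
    omega
  have hcoefCast : ∀ (d : Fin n → ZMod p) (e : Fin (t + 1) → ZMod p)
      (h : Fin t → ZMod p) (i : Fin n), (∀ r, i ≠ K r) →
      coefF (n := n) (s := t + 1) d e J h (Fin.castAdd (t + 1) i) = d i := by
    intro d e h i hi
    rw [coefF_not, baseF_castAdd]
    intro r hc
    have h1 := congrArg Fin.val hc
    exact hi r (Fin.ext h1)
  -- reformulation of the sets via `PhiF` and `coefF`
  have hZ' : ∀ d e e', Zset d e e' =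
      {v | ∃ h : Fin t → ZMod p, v = PhiF p (n + t + 1) Q e' (coefF (n := n) (s := t + 1) d e J h)} := by
    intro d e e'
    have key : ∀ h : Fin t → ZMod p,
        (fun x : Fin (n + t + 1) → ZMod p =>
          Q x + (∑ α : Fin n, d α * x (Fin.castLE (by omega) α)) +
            (∑ β : Fin (t + 1), e β * x ⟨n + (β : ℕ), by have := β.isLt; omega⟩) + e' +
            ∑ r : Fin t, h r * x (Fin.castLE (by omega) (π r (m r - 1)))) =
        fun x => Q x + (e' + ∑ i, coefF (n := n) (s := t + 1) d e J h i * x i) := by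
      intro h
      funext x
      rw [sum_coefF]
      rw [show (∑ α : Fin n, d α * x (Fin.castAdd (t + 1) α)) =
            ∑ α : Fin n, d α * x (Fin.castLE (by omega : n ≤ n + t + 1) α) from rfl,
          show (∑ β : Fin (t + 1), e β * x (Fin.natAdd n β)) =
            ∑ β : Fin (t + 1), e β * x ⟨n + (β : ℕ), by have := β.isLt; omega⟩ from rfl,
          show (∑ r : Fin t, h r * x (J r)) =
            ∑ r : Fin t, h r * x (Fin.castLE (by omega : n ≤ n + t + 1)
              (π r (m r - 1))) from by simp only [hJdef, hKdef]]
      ring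
    rw [hZ]
    ext v
    simp only [Set.mem_setOf_eq]
    constructor
    · rintro ⟨h, rfl⟩
      exact ⟨h, congrArg (xiVec p (n + t + 1)) (key h)⟩
    · rintro ⟨h, rfl⟩
      exact ⟨h, (congrArg (xiVec p (n + t + 1)) (key h)).symm⟩
  -- extracting data from an equality of coefficient functions
  have hext : ∀ (d₁ d₂ : Fin n → ZMod p) (e₁ e₂ : Fin (t + 1) → ZMod p)
      (h₁ h₂ : Fin t → ZMod p), coefF (n := n) (s := t + 1) d₁ e₁ J h₁ = coefF (n := n) (s := t + 1) d₂ e₂ J h₂ →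
      (∀ i : Fin n, (∀ r, i ≠ K r) → d₁ i = d₂ i) ∧ e₁ = e₂ ∧
        ∀ r, d₁ (K r) + h₁ r = d₂ (K r) + h₂ r := by
    intro d₁ d₂ e₁ e₂ h₁ h₂ H
    refine ⟨fun i hi => ?_, funext fun β => ?_, fun r => ?_⟩
    · have h3 := congrFun H (Fin.castAdd (t + 1) i)
      rwa [hcoefCast _ _ _ _ hi, hcoefCast _ _ _ _ hi] at h3
    · have h3 := congrFun H (Fin.natAdd n β)
      rwa [hcoefNat, hcoefNat] at h3
    · have h3 := congrFun H (J r)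
      rwa [hcoefJ, hcoefJ] at h3
  -- sets only depend on the values of `d` off the range of `K`
  have hZsub : ∀ (d₁ d₂ : Fin n → ZMod p) (e : Fin (t + 1) → ZMod p) (e' : ZMod p),
      (∀ i : Fin n, (∀ r, i ≠ K r) → d₁ i = d₂ i) →
      Zset d₁ e e' ⊆ Zset d₂ e e' := by
    intro d₁ d₂ e e' hdd
    rw [hZ', hZ']
    rintro v ⟨g, rfl⟩
    refine ⟨fun r => g r + (d₁ (K r) - d₂ (K r)), ?_⟩
    have hcc : coefF (n := n) (s := t + 1) d₁ e J g =
        coefF (n := n) (s := t + 1) d₂ e J (fun r => g r + (d₁ (K r) - d₂ (K r))) := by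
      funext i
      by_cases hiJ : ∃ r, i = J r
      · obtain ⟨r, rfl⟩ := hiJ
        rw [hcoefJ, hcoefJ]
        ring
      · push_neg at hiJ
        rw [coefF_not hiJ, coefF_not hiJ]
        by_cases hin : (i : ℕ) < n
        · simp only [baseF, dif_pos hin]
          refine hdd ⟨i, hin⟩ fun r hc => (hiJ r) ?_
          have h1 := congrArg Fin.val hc
          exact Fin.ext h1
        · simp only [baseF, dif_neg hin]
    rw [hcc]
  have hZeq : ∀ (d₁ d₂ : Fin n → ZMod p) (e : Fin (t + 1) → ZMod p) (e' : ZMod p),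
      (∀ i : Fin n, (∀ r, i ≠ K r) → d₁ i = d₂ i) →
      Zset d₁ e e' = Zset d₂ e e' := fun d₁ d₂ e e' hdd =>
    (hZsub d₁ d₂ e e' hdd).antisymm (hZsub d₂ d₁ e e' fun i hi => (hdd i hi).symm)
  refine ⟨?_, ?_, ?_, ?_, ?_⟩
  · -- pairwise equal-or-disjoint
    intro d₁ d₂ e₁ e₂ e₁' e₂'
    by_cases hdis : Disjoint (Zset d₁ e₁ e₁') (Zset d₂ e₂ e₂')
    · exact Or.inr hdis
    · left
      rw [Set.not_disjoint_iff] at hdis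
      obtain ⟨v, hv₁, hv₂⟩ := hdis
      rw [hZ'] at hv₁ hv₂
      obtain ⟨h₁, rfl⟩ := hv₁
      obtain ⟨h₂, hv₂⟩ := hv₂
      obtain ⟨he', hcoef⟩ := PhiF_inj hv₂
      obtain ⟨hd, he, -⟩ := hext _ _ _ _ _ _ hcoef
      rw [hZeq d₁ d₂ e₁ e₁' hd, he, he']
  · -- cardinality of each set
    intro d e e'
    have hrange : Zset d e e' =
        Set.range (fun h : Fin t → ZMod p => PhiF p (n + t + 1) Q e' (coefF (n := n) (s := t + 1) d e J h)) := by
      rw [hZ']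
      ext v
      exact ⟨fun ⟨h, hv⟩ => ⟨h, hv.symm⟩, fun ⟨h, hv⟩ => ⟨h, hv.symm⟩⟩
    have hinj : Function.Injective
        (fun h : Fin t → ZMod p => PhiF p (n + t + 1) Q e' (coefF (n := n) (s := t + 1) d e J h)) := by
      intro h₁ h₂ hh
      obtain ⟨-, hc⟩ := PhiF_inj hh
      funext r
      have h3 := congrFun hc (J r)
      rw [hcoefJ, hcoefJ] at h3
      exact add_left_cancel h3
    rw [hrange, ← Nat.card_coe_set_eq, Nat.card_range_of_injective hinj,
      Nat.card_fun, Nat.card_zmod, Nat.card_eq_fintype_card, Fintype.card_fin]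
  · -- the union is the whole coset
    ext v
    simp only [Set.mem_iUnion, Set.mem_setOf_eq]
    constructor
    · rintro ⟨d, e, e', hv⟩
      rw [hZ'] at hv
      obtain ⟨h, rfl⟩ := hv
      exact ⟨xiVec p (n + t + 1) (fun x => e' + ∑ i, coefF (n := n) (s := t + 1) d e J h i * x i),
        ⟨e', coefF (n := n) (s := t + 1) d e J h, rfl⟩, funext fun x => rfl⟩
    · rintro ⟨w, ⟨a0, a, rfl⟩, rfl⟩
      refine ⟨fun α => a (Fin.castAdd (t + 1) α), fun β => a (Fin.natAdd n β), a0, ?_⟩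
      rw [hZ']
      refine ⟨0, ?_⟩
      have hca : coefF (n := n) (s := t + 1) (fun α => a (Fin.castAdd (t + 1) α))
          (fun β => a (Fin.natAdd n β)) J 0 = a := by
        funext i
        simp only [coefF, Pi.zero_apply, ite_self, Finset.sum_const_zero, add_zero]
        by_cases hin : (i : ℕ) < n
        · simp only [baseF, dif_pos hin]
          exact congrArg a (Fin.ext rfl)
        · simp only [baseF, dif_neg hin]
          refine congrArg a (Fin.ext ?_)
          show n + ((i : ℕ) - n) = (i : ℕ)
          have := i.isLt
          omega
      rw [hca]
      funext x
      rfl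
  · -- cardinality of the coset
    have hco : {v | ∃ w ∈ GRM1 p (n + t + 1), v = xiVec p (n + t + 1) Q + w} =
        Set.range (fun q : ZMod p × (Fin (n + t + 1) → ZMod p) =>
          PhiF p (n + t + 1) Q q.1 q.2) := by
      ext v
      simp only [Set.mem_setOf_eq, Set.mem_range]
      constructor
      · rintro ⟨w, ⟨a0, a, rfl⟩, rfl⟩
        exact ⟨(a0, a), funext fun x => rfl⟩
      · rintro ⟨⟨a0, a⟩, rfl⟩
        exact ⟨xiVec p (n + t + 1) fun x => a0 + ∑ i, a i * x i, ⟨a0, a, rfl⟩,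
          funext fun x => rfl⟩
    have hinj2 : Function.Injective (fun q : ZMod p × (Fin (n + t + 1) → ZMod p) =>
        PhiF p (n + t + 1) Q q.1 q.2) := by
      intro q₁ q₂ hq
      obtain ⟨h1, h2⟩ := PhiF_inj hq
      exact Prod.ext h1 h2
    rw [hco, ← Nat.card_coe_set_eq, Nat.card_range_of_injective hinj2,
      Nat.card_prod, Nat.card_zmod, Nat.card_fun, Nat.card_zmod,
      Nat.card_eq_fintype_card, Fintype.card_fin]
    rw [show n + t + 2 = (n + t + 1) + 1 from rfl, pow_succ]
    ring
  · -- number of distinct sets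
    have hrange : {S : Set (Fin (p ^ (n + t + 1)) → ZMod p) |
        ∃ d e e', S = Zset d e e'} =
        Set.range (fun q : {d : Fin n → ZMod p // ∀ r, d (K r) = 0} ×
            (Fin (t + 1) → ZMod p) × ZMod p => Zset q.1.1 q.2.1 q.2.2) := by
      ext S
      simp only [Set.mem_setOf_eq, Set.mem_range]
      constructor
      · rintro ⟨d, e, e', rfl⟩
        refine ⟨⟨⟨fun i => d i - ∑ r, if i = K r then d (K r) else 0, fun r => by
          show d (K r) - (∑ s, if K r = K s then d (K s) else 0) = 0
          rw [sum_ite_K hKinj (fun s => d (K s)) r, sub_self]⟩, e, e'⟩, ?_⟩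
        exact hZeq _ _ e e' fun i hi => by
          show d i - (∑ r, if i = K r then d (K r) else 0) = d i
          rw [Finset.sum_eq_zero (fun r _ => if_neg (hi r)), sub_zero]
      · rintro ⟨q, rfl⟩
        exact ⟨q.1.1, q.2.1, q.2.2, rfl⟩
    have hinj3 : Function.Injective
        (fun q : {d : Fin n → ZMod p // ∀ r, d (K r) = 0} ×
            (Fin (t + 1) → ZMod p) × ZMod p => Zset q.1.1 q.2.1 q.2.2) := by
      rintro ⟨⟨d₁, hd₁⟩, e₁, e₁'⟩ ⟨⟨d₂, hd₂⟩, e₂, e₂'⟩ hq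
      simp only at hq
      have hmem : PhiF p (n + t + 1) Q e₁' (coefF (n := n) (s := t + 1) d₁ e₁ J 0) ∈ Zset d₂ e₂ e₂' := by
        rw [← hq, hZ']
        exact ⟨0, rfl⟩
      rw [hZ'] at hmem
      obtain ⟨h₂, heq⟩ := hmem
      obtain ⟨he', hcoef⟩ := PhiF_inj heq
      obtain ⟨hd, he, -⟩ := hext _ _ _ _ _ _ hcoef
      have hdeq : d₁ = d₂ := by
        funext i
        by_cases hiK : ∃ r, i = K r
        · obtain ⟨r, rfl⟩ := hiK
          rw [hd₁ r, hd₂ r]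
        · push_neg at hiK
          exact hd i hiK
      simp only [Prod.mk.injEq, Subtype.mk.injEq]
      exact ⟨hdeq, he, he'⟩
    rw [hrange, ← Nat.card_coe_set_eq, Nat.card_range_of_injective hinj3,
      Nat.card_prod, Nat.card_prod, card_vanish (Fact.out : p.Prime).ne_zero K hKinj,
      show Nat.card (Fin (t + 1) → ZMod p) = p ^ (t + 1) from by
        simp [Nat.card_fun, Nat.card_zmod, Nat.card_eq_fintype_card],
      Nat.card_zmod, ← pow_succ, ← pow_add,
      show n - t + (t + 1 + 1) = n + 2 from by omega]
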